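/- Let (E, B, π, [·,·], D) be a pre-Courant algebroid with [Df, y] = 0 for all f ∈ C∞(M) and y ∈ Γ(E), and with the Leibniz rules [x, fy] = f[x,y] + (π(x)·f)y and [fx,y] = f[x,y] − (π(y)·f)x + B(x,y)Df. Define the Jacobiator J(x,y,z) = [x,[y,z]] − [[x,y],z] − [y,[x,z]]. Then J(fx, y, z) = f·J(x,y,z) for all f ∈ C∞(M), i.e. J is C∞(M)-linear in its first argument. -/

import Mathlib

/-- An algebraic model of a pre-Courant algebroid: `R` plays the role of
`C∞(M)`, `E` the role of the space of sections `Γ(E)`, `B` the fiber metric,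
`anchor x f` the derivative `π(x)·f`, `bracket` the (non-skew) bracket and
`Dop` the operator `D` with `B(Df, x) = π(x)·f`, satisfying the axioms
`π(x)·B(y,z) = B([x,y],z) + B(y,[x,z])` and `[x,x] = ½ D(B(x,x))`. -/
structure PreCourant (R : Type*) [CommRing R] [Invertible (2 : R)]
    (E : Type*) [AddCommGroup E] [Module R E] where
  B : E →ₗ[R] E →ₗ[R] R
  B_symm : ∀ x y, B x y = B y x
  B_nondeg : ∀ x, (∀ y, B x y = 0) → x = 0
  anchor : E → R → R
  anchor_deriv : ∀ x f g, anchor x (f * g) = f * anchor x g + g * anchor x f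
  bracket : E → E → E
  bracket_add_left : ∀ x y z, bracket (x + y) z = bracket x z + bracket y z
  bracket_add_right : ∀ x y z, bracket x (y + z) = bracket x y + bracket x z
  Dop : R → E
  Dop_add : ∀ f g, Dop (f + g) = Dop f + Dop g
  Dop_def : ∀ f x, B (Dop f) x = anchor x f
  invariance : ∀ x y z, anchor x (B y z) = B (bracket x y) z + B y (bracket x z)
  sq : ∀ x, bracket x x = (⅟(2 : R)) • Dop (B x x)

/-- The Jacobiator of the bracket. -/
def PreCourant.Jac {R : Type*} [CommRing R] [Invertible (2 : R)]
    {E : Type*} [AddCommGroup E] [Module R E] (P : PreCourant R E)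
    (x y z : E) : E :=
  P.bracket x (P.bracket y z) - P.bracket (P.bracket x y) z
    - P.bracket y (P.bracket x z)

namespace PreCourant
variable {R : Type*} [CommRing R] [Invertible (2 : R)]
    {E : Type*} [AddCommGroup E] [Module R E] (P : PreCourant R E)

lemma bzero_left (z : E) : P.bracket 0 z = 0 := by
  have h := P.bracket_add_left 0 0 z
  rw [add_zero] at h
  exact right_eq_add.mp h

lemma bneg_left (x z : E) : P.bracket (-x) z = -P.bracket x z := by
  have h := P.bracket_add_left x (-x) z
  rw [add_neg_cancel, P.bzero_left] at h
  exact (neg_eq_of_add_eq_zero_right h.symm).symm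

lemma bsub_left (x y z : E) :
    P.bracket (x - y) z = P.bracket x z - P.bracket y z := by
  rw [sub_eq_add_neg, P.bracket_add_left, P.bneg_left, sub_eq_add_neg]

lemma bneg_right (x z : E) : P.bracket z (-x) = -P.bracket z x := by
  have h0 := P.bracket_add_right z 0 0
  rw [add_zero] at h0
  have hz : P.bracket z 0 = 0 := right_eq_add.mp h0
  have h := P.bracket_add_right z x (-x)
  rw [add_neg_cancel, hz] at h
  exact (neg_eq_of_add_eq_zero_right h.symm).symm

lemma bsub_right (x y z : E) :
    P.bracket z (x - y) = P.bracket z x - P.bracket z y := by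
  rw [sub_eq_add_neg, P.bracket_add_right, P.bneg_right, sub_eq_add_neg]

lemma swap (a b : E) :
    P.bracket a b + P.bracket b a = P.Dop (P.B a b) := by
  have h := P.sq (a + b)
  rw [P.bracket_add_left, P.bracket_add_right, P.bracket_add_right,
    P.sq a, P.sq b] at h
  have hB : P.B (a + b) (a + b)
      = P.B a a + (P.B a b + P.B a b) + P.B b b := by
    simp [map_add, LinearMap.add_apply, P.B_symm b a]; ring
  rw [hB, P.Dop_add, P.Dop_add, P.Dop_add] at h
  have h2 : (⅟(2:R)) • (P.Dop (P.B a b) + P.Dop (P.B a b))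
      = P.Dop (P.B a b) := by
    rw [← two_smul R, smul_smul, invOf_mul_self, one_smul]
  have := h
  rw [smul_add, smul_add, h2] at this
  have h3 : P.bracket a b + P.bracket b a
      = (⅟(2:R)) • P.Dop (P.B a a) + P.Dop (P.B a b)
        + (⅟(2:R)) • P.Dop (P.B b b)
        - (⅟(2:R)) • P.Dop (P.B a a) - (⅟(2:R)) • P.Dop (P.B b b) := by
    rw [← this]; abel
  rw [h3]; abel

lemma swap_eq (a b : E) :
    P.bracket b a = P.Dop (P.B a b) - P.bracket a b := by
  rw [← P.swap a b]; abel

lemma bracket_Dop (hDf : ∀ (f : R) (y : E), P.bracket (P.Dop f) y = 0)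
    (y : E) (f : R) : P.bracket y (P.Dop f) = P.Dop (P.anchor y f) := by
  have h := P.swap (P.Dop f) y
  rw [hDf, zero_add, P.Dop_def] at h
  exact h

lemma anchor_comm (hDf : ∀ (f : R) (y : E), P.bracket (P.Dop f) y = 0)
    (y z : E) (f : R) :
    P.anchor y (P.anchor z f)
      = P.anchor z (P.anchor y f) + P.anchor (P.bracket y z) f := by
  have h := P.invariance y (P.Dop f) z
  rw [P.Dop_def, P.bracket_Dop hDf, P.Dop_def, P.Dop_def] at h
  exact h

lemma key (x y z : E) :
    P.B x (P.bracket y z) - P.B (P.bracket x y) z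
      + P.anchor z (P.B x y) - P.anchor y (P.B x z) = 0 := by
  have h1 := P.invariance y x z
  have h2 : P.B (P.bracket x y) z + P.B (P.bracket y x) z
      = P.anchor z (P.B x y) := by
    rw [← P.Dop_def (P.B x y) z, ← P.swap x y, map_add, LinearMap.add_apply]
  have hsym : P.B x (P.bracket y z) = P.B (P.bracket y z) x := P.B_symm _ _
  linear_combination -h1 - h2

end PreCourant

/-- If `[Df, y] = 0` and both Leibniz rules hold, the Jacobiator is
`C∞(M)`-linear in its first argument. -/
theorem stmt7 {R : Type*} [CommRing R] [Invertible (2 : R)]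
    {E : Type*} [AddCommGroup E] [Module R E] (P : PreCourant R E)
    (hDf : ∀ (f : R) (y : E), P.bracket (P.Dop f) y = 0)
    (hLeibR : ∀ (x y : E) (f : R),
      P.bracket x (f • y) = f • P.bracket x y + (P.anchor x f) • y)
    (hLeibL : ∀ (x y : E) (f : R),
      P.bracket (f • x) y
        = f • P.bracket x y - (P.anchor y f) • x + (P.B x y) • P.Dop f) :
    ∀ (f : R) (x y z : E), P.Jac (f • x) y z = f • P.Jac x y z := by
  intro f x y z
  unfold PreCourant.Jac
  rw [hLeibL x (P.bracket y z) f,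
      hLeibL x y f,
      hLeibL x z f,
      P.bracket_add_left, P.bsub_left,
      P.bracket_add_right, P.bsub_right,
      hLeibL (P.bracket x y) z f,
      hLeibL x z (P.anchor y f),
      hLeibL (P.Dop f) z (P.B x y),
      hDf f z, P.Dop_def,
      hLeibR y (P.bracket x z) f,
      hLeibR y x (P.anchor z f),
      hLeibR y (P.Dop f) (P.B x z),
      P.bracket_Dop hDf y f,
      P.swap_eq x y]
  have hc := P.anchor_comm hDf y z f
  have hk := P.key x y z
  match_scalars
  all_goals try ring
  all_goals try linear_combination hc
  all_goals linear_combination hk
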